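/- Let λ > 0 be a real number, let φ_1, …, φ_N ∈ ℝᵈ, and define the set function J(S) = log det(λ·I + ∑_{i∈S} φ_i φ_iᵀ) on finite subsets S ⊆ {1, …, N}. Then J is submodular: for all finite S ⊆ T ⊆ {1, …, N} and every index i ∉ T, J(S ∪ {i}) − J(S) ≥ J(T ∪ {i}) − J(T). -/

import Mathlib

open Matrix Finset

private lemma psd_vecMulVec {d : ℕ} (v : Fin d → ℝ) : (vecMulVec v v).PosSemidef := by
  have h : vecMulVec v v = (replicateRow Unit v)ᴴ * (replicateRow Unit v) := by
    rw [conjTranspose_replicateRow]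
    simp [vecMulVec_eq Unit]
  rw [h]
  exact posSemidef_conjTranspose_mul_self _

private lemma psd_sum {d N : ℕ} (φ : Fin N → (Fin d → ℝ)) (S : Finset (Fin N)) :
    (∑ j ∈ S, vecMulVec (φ j) (φ j)).PosSemidef := by
  classical
  induction S using Finset.induction_on with
  | empty => simpa using Matrix.PosSemidef.zero
  | insert _ _ hj ih =>
      rw [Finset.sum_insert hj]
      exact (psd_vecMulVec _).add ih

private lemma pd_smul_one {d : ℕ} {lam : ℝ} (hlam : 0 < lam) :
    (lam • (1 : Matrix (Fin d) (Fin d) ℝ)).PosDef := by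
  have h : lam • (1 : Matrix (Fin d) (Fin d) ℝ) = diagonal (fun _ => lam) := by
    ext i j
    by_cases hij : i = j <;> simp [Matrix.one_apply, diagonal, hij]
  rw [h]
  exact posDef_diagonal_iff.mpr (fun _ => hlam)

private lemma det_rank_one_update {d : ℕ} {A : Matrix (Fin d) (Fin d) ℝ} (hA : A.PosDef)
    (u : Fin d → ℝ) :
    (A + vecMulVec u u).det = A.det * (1 + u ⬝ᵥ (A⁻¹ *ᵥ u)) := by
  rw [vecMulVec_eq Unit, det_add_replicateCol_mul_replicateRow hA.det_pos.ne'.isUnit]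
  congr 1
  rw [det_unique, Matrix.add_apply, Matrix.one_apply_eq]
  congr 1
  simp only [Matrix.mul_apply, replicateRow_apply, replicateCol_apply, mulVec, dotProduct, Finset.sum_mul]
  rw [Finset.sum_comm]
  congr 1
  ext j
  rw [Finset.mul_sum]
  congr 1
  ext k
  ring

private lemma quad_mono {d : ℕ} {A M : Matrix (Fin d) (Fin d) ℝ} (hA : A.PosDef)
    (hM : M.PosSemidef) (u : Fin d → ℝ) :
    u ⬝ᵥ ((A + M)⁻¹ *ᵥ u) ≤ u ⬝ᵥ (A⁻¹ *ᵥ u) := by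
  have hB : (A + M).PosDef := hA.add_posSemidef hM
  set B := A + M with hBdef
  set x := B⁻¹ *ᵥ u with hx
  set y := A⁻¹ *ᵥ u with hy
  have hBx : B *ᵥ x = u := by
    rw [hx, mulVec_mulVec, Matrix.mul_nonsing_inv _ hB.det_pos.ne'.isUnit, one_mulVec]
  have hAy : A *ᵥ y = u := by
    rw [hy, mulVec_mulVec, Matrix.mul_nonsing_inv _ hA.det_pos.ne'.isUnit, one_mulVec]
  -- symmetry of A over ℝ
  have hs : Aᵀ = A := by
    ext a b
    have h2 : Aᴴ a b = A a b := by rw [hA.isHermitian.eq]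
    simpa [conjTranspose_apply] using h2
  have hsymA : ∀ v w : Fin d → ℝ, v ⬝ᵥ (A *ᵥ w) = (A *ᵥ v) ⬝ᵥ w := by
    intro v w
    rw [dotProduct_mulVec]
    congr 1
    conv_lhs => rw [← hs]
    rw [vecMul_transpose]
  have hMz : 0 ≤ x ⬝ᵥ (M *ᵥ x) := by
    have := hM.dotProduct_mulVec_nonneg x
    simpa using this
  have hAz : 0 ≤ (x - y) ⬝ᵥ (A *ᵥ (x - y)) := by
    have := hA.posSemidef.dotProduct_mulVec_nonneg (x - y)
    simpa using this
  have hexp : (x - y) ⬝ᵥ (A *ᵥ (x - y)) =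
      x ⬝ᵥ (A *ᵥ x) - x ⬝ᵥ u - u ⬝ᵥ x + u ⬝ᵥ y := by
    rw [mulVec_sub, dotProduct_sub, sub_dotProduct, sub_dotProduct]
    have h1 : x ⬝ᵥ (A *ᵥ y) = x ⬝ᵥ u := by rw [hAy]
    have h2 : y ⬝ᵥ (A *ᵥ x) = u ⬝ᵥ x := by rw [hsymA y x, hAy]
    have h3 : y ⬝ᵥ (A *ᵥ y) = u ⬝ᵥ y := by
      rw [hsymA y y, hAy]
    rw [h1, h2, h3]
    ring
  have hBxx : x ⬝ᵥ (B *ᵥ x) = x ⬝ᵥ u := by rw [hBx]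
  have hBsum : x ⬝ᵥ (B *ᵥ x) = x ⬝ᵥ (A *ᵥ x) + x ⬝ᵥ (M *ᵥ x) := by
    rw [hBdef, add_mulVec, dotProduct_add]
  have hux : u ⬝ᵥ x = x ⬝ᵥ u := dotProduct_comm u x
  linarith

private lemma log_gain {d : ℕ} {A : Matrix (Fin d) (Fin d) ℝ} (hA : A.PosDef)
    (u : Fin d → ℝ) :
    Real.log (A + vecMulVec u u).det - Real.log A.det =
      Real.log (1 + u ⬝ᵥ (A⁻¹ *ᵥ u)) := by
  have hq : 0 ≤ u ⬝ᵥ (A⁻¹ *ᵥ u) := by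
    have := hA.inv.posSemidef.dotProduct_mulVec_nonneg u
    simpa using this
  rw [det_rank_one_update hA u, Real.log_mul hA.det_pos.ne' (by linarith)]
  ring

/-- Submodularity of the D-optimal objective `J(S) = log det(λI + ∑_{i∈S} φ_i φ_iᵀ)`:
for `S ⊆ T` and `i ∉ T`, `J(S ∪ {i}) − J(S) ≥ J(T ∪ {i}) − J(T)`. -/
theorem logdet_submodular (d N : ℕ) (lam : ℝ) (hlam : 0 < lam)
    (φ : Fin N → (Fin d → ℝ)) (S T : Finset (Fin N)) (hST : S ⊆ T)
    (i : Fin N) (hi : i ∉ T) :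
    Real.log (lam • (1 : Matrix (Fin d) (Fin d) ℝ) +
        ∑ j ∈ insert i T, vecMulVec (φ j) (φ j)).det -
      Real.log (lam • (1 : Matrix (Fin d) (Fin d) ℝ) + ∑ j ∈ T, vecMulVec (φ j) (φ j)).det ≤
    Real.log (lam • (1 : Matrix (Fin d) (Fin d) ℝ) +
        ∑ j ∈ insert i S, vecMulVec (φ j) (φ j)).det -
      Real.log (lam • (1 : Matrix (Fin d) (Fin d) ℝ) + ∑ j ∈ S, vecMulVec (φ j) (φ j)).det := by
  classical
  set u := φ i with hu
  set AS := lam • (1 : Matrix (Fin d) (Fin d) ℝ) + ∑ j ∈ S, vecMulVec (φ j) (φ j) with hAS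
  set AT := lam • (1 : Matrix (Fin d) (Fin d) ℝ) + ∑ j ∈ T, vecMulVec (φ j) (φ j) with hAT
  have hiS : i ∉ S := fun h => hi (hST h)
  have hS_pd : AS.PosDef := (pd_smul_one hlam).add_posSemidef (psd_sum φ S)
  have hT_pd : AT.PosDef := (pd_smul_one hlam).add_posSemidef (psd_sum φ T)
  have hsumS : lam • (1 : Matrix (Fin d) (Fin d) ℝ) + ∑ j ∈ insert i S, vecMulVec (φ j) (φ j)
      = AS + vecMulVec u u := by
    rw [hAS, Finset.sum_insert hiS]; abel
  have hsumT : lam • (1 : Matrix (Fin d) (Fin d) ℝ) + ∑ j ∈ insert i T, vecMulVec (φ j) (φ j)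
      = AT + vecMulVec u u := by
    rw [hAT, Finset.sum_insert hi]; abel
  rw [hsumS, hsumT, log_gain hS_pd u, log_gain hT_pd u]
  have hATeq : AT = AS + ∑ j ∈ T \ S, vecMulVec (φ j) (φ j) := by
    rw [hAS, hAT, ← Finset.sum_sdiff hST]
    abel
  have hmono : u ⬝ᵥ (AT⁻¹ *ᵥ u) ≤ u ⬝ᵥ (AS⁻¹ *ᵥ u) := by
    rw [hATeq]
    exact quad_mono hS_pd (psd_sum φ (T \ S)) u
  have hqT : 0 ≤ u ⬝ᵥ (AT⁻¹ *ᵥ u) := by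
    have := hT_pd.inv.posSemidef.dotProduct_mulVec_nonneg u
    simpa using this
  exact Real.log_le_log (by linarith) (by linarith)
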